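/- Let X be a compact Hausdorff space and let ⟨a_n : n ∈ ω⟩ be a sequence in X. Let K be the set of cluster points of this sequence. If K has an isolated point x, then some subsequence of ⟨a_n⟩ converges to x. -/

import Mathlib

/-- If x is an isolated point of the set K of cluster points of a sequence
⟨a_n⟩ in a compact Hausdorff space, then some subsequence of ⟨a_n⟩ converges
to x. -/
theorem subsequence_converges_to_isolated_cluster_point
    {X : Type*} [TopologicalSpace X] [CompactSpace X] [T2Space X]
    (a : ℕ → X) (K : Set X)
    (hK : K = {z : X | ∀ V ∈ nhds z, {n : ℕ | a n ∈ V}.Infinite})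
    (x : X) (hx : x ∈ K)
    (hiso : ∃ U : Set X, IsOpen U ∧ U ∩ K = {x}) :
    ∃ φ : ℕ → ℕ, StrictMono φ ∧
      Filter.Tendsto (a ∘ φ) Filter.atTop (nhds x) := by
  obtain ⟨U, hUo, hUK⟩ := hiso
  have hxU : x ∈ U := by
    have : x ∈ U ∩ K := hUK ▸ (Set.mem_singleton x)
    exact this.1
  obtain ⟨C, hCnhds, hCclosed, hCU⟩ :=
    exists_mem_nhds_isClosed_subset (hUo.mem_nhds hxU)
  have hxK := hx
  rw [hK] at hxK
  have hS : {n : ℕ | a n ∈ C}.Infinite := hxK C hCnhds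
  set φ : ℕ → ℕ := Nat.nth (fun n => a n ∈ C) with hφ
  have hmono : StrictMono φ := Nat.nth_strictMono hS
  refine ⟨φ, hmono, ?_⟩
  refine hCclosed.isCompact.tendsto_nhds_of_unique_mapClusterPt
    (Filter.Eventually.of_forall fun k => ?_) (fun y hyC hcl => ?_)
  · exact Nat.nth_mem_of_infinite hS k
  · have hyK : y ∈ K := by
      rw [hK]
      intro V hV
      have hfreq : ∃ᶠ n in Filter.atTop, a (φ n) ∈ V :=
        mapClusterPt_iff_frequently.mp hcl V hV
      have hinf : {n : ℕ | a (φ n) ∈ V}.Infinite :=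
        Nat.frequently_atTop_iff_infinite.mp hfreq
      have : (φ '' {n : ℕ | a (φ n) ∈ V}).Infinite :=
        hinf.image (hmono.injective.injOn)
      exact this.mono (by rintro m ⟨n, hn, rfl⟩; exact hn)
    have : y ∈ U ∩ K := ⟨hCU hyC, hyK⟩
    rw [hUK] at this
    exact this
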